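/- arXiv:2206.07412 — 2 statements merged into one kernel-verified Lean document; each statement's English description precedes it below -/
import Mathlib

section
/- Every composite of the generators R_{a,b} and their generalised inverses is monotone: if f is a partial injection on ℕ obtained by composing maps of the forms n ↦ an + b and their partial inverses, then whenever f(x) and f(y) are both defined, x ≤ y iff f(x) ≤ f(y). -/
def pcomp (f g : ℕ → Option ℕ) : ℕ → Option ℕ := fun n => (g n).bind f

def Rgen (a b : ℕ) : ℕ → Option ℕ := fun n => if n % a = b then some ((n - b) / a) else none

def Rdag (a b : ℕ) : ℕ → Option ℕ := fun n => some (a * n + b)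

def MonoPI (f : ℕ → Option ℕ) : Prop :=
  ∀ x y u v : ℕ, f x = some u → f y = some v → (x ≤ y ↔ u ≤ v)

lemma mono_pcomp {f g : ℕ → Option ℕ} (hf : MonoPI f) (hg : MonoPI g) :
    MonoPI (pcomp f g) := by
  intro x y u v hx hy
  simp only [pcomp, Option.bind_eq_some_iff] at hx hy
  obtain ⟨a, ha, ha'⟩ := hx
  obtain ⟨b, hb, hb'⟩ := hy
  exact (hg x y a b ha hb).trans (hf a b u v ha' hb')

lemma mono_Rdag {a b : ℕ} (h : b < a) : MonoPI (Rdag a b) := by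
  intro x y u v hx hy
  simp only [Rdag, Option.some_inj] at hx hy
  subst hx hy
  have ha : 0 < a := Nat.lt_of_le_of_lt (Nat.zero_le b) h
  constructor
  · intro hxy; exact Nat.add_le_add_right (Nat.mul_le_mul_left a hxy) b
  · intro hxy
    have := Nat.le_of_add_le_add_right hxy
    exact Nat.le_of_mul_le_mul_left this (Nat.lt_of_le_of_lt (Nat.zero_le b) h)

lemma mono_Rgen {a b : ℕ} (h : b < a) : MonoPI (Rgen a b) := by
  intro x y u v hx hy
  simp only [Rgen] at hx hy
  split at hx
  case isFalse => exact absurd hx (by simp)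
  case isTrue hxa =>
  split at hy
  case isFalse => exact absurd hy (by simp)
  case isTrue hya =>
  have ha : 0 < a := Nat.lt_of_le_of_lt (Nat.zero_le b) h
  have hsubx : x - b = a * (x / a) := by
    have := Nat.div_add_mod x a; omega
  have hsuby : y - b = a * (y / a) := by
    have := Nat.div_add_mod y a; omega
  have hu : u = x / a := by
    have := Option.some_inj.mp hx
    rw [← this, hsubx, Nat.mul_div_cancel_left _ ha]
  have hv : v = y / a := by
    have := Option.some_inj.mp hy
    rw [← this, hsuby, Nat.mul_div_cancel_left _ ha]
  have hx' : x = a * (x / a) + b := by conv_lhs => rw [← Nat.div_add_mod x a]; rw [hxa]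
  have hy' : y = a * (y / a) + b := by conv_lhs => rw [← Nat.div_add_mod y a]; rw [hya]
  subst hu hv
  constructor
  · intro hxy; rw [hx', hy'] at hxy; exact Nat.le_of_mul_le_mul_left (Nat.le_of_add_le_add_right hxy) ha
  · intro huv
    rw [hx', hy']
    exact Nat.add_le_add_right (Nat.mul_le_mul_left a huv) b

/-- Any composite of the generators `R_{a,b}` and their generalised inverses is monotone. -/
theorem composites_monotone (L : List (ℕ × ℕ × Bool)) (hL : ∀ g ∈ L, g.2.1 < g.1)
    (F : ℕ → Option ℕ)
    (hF : F = L.foldr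
      (fun g f => pcomp (if g.2.2 then Rdag g.1 g.2.1 else Rgen g.1 g.2.1) f)
      (fun n => some n)) :
    ∀ x y u v : ℕ, F x = some u → F y = some v → (x ≤ y ↔ u ≤ v) := by
  subst hF
  induction L with
  | nil =>
    intro x y u v hx hy
    simp only [List.foldr_nil, Option.some_inj] at hx hy
    subst hx hy
    rfl
  | cons g L ih =>
    have hmono : MonoPI (if g.2.2 then Rdag g.1 g.2.1 else Rgen g.1 g.2.1) := by
      have := hL g (List.mem_cons_self)
      split
      · exact mono_Rdag this
      · exact mono_Rgen this
    exact mono_pcomp hmono (ih (fun g' hg' => hL g' (List.mem_cons_of_mem _ hg')))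
end

section
/- For n, p in ℕ⁺, the partial identity on nℕ composed with the partial identity on pℕ equals the partial identity on lcm(n,p)ℕ, and consequently the assignment [m,n] ↦ ×_m ∘ ×_n^‡ from Leech's monoid L (with composition (m,n)(p,q) = (mp/gcd(n,p), nq/gcd(n,p))) to partial injections on ℕ is multiplicative: ×_m ×_n^‡ ∘ ×_p ×_q^‡ = ×_{mp/gcd(n,p)} ×_{nq/gcd(n,p)}^‡. -/
/-- Curried multiplication `×_m`. -/
def pmul (m : ℕ) : ℕ → Option ℕ := fun x => some (x * m)

/-- Whole-number division `×_n^‡`, defined on `nℕ`. -/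
def pmulDag (n : ℕ) : ℕ → Option ℕ := fun x => if n ∣ x then some (x / n) else none

/-- Partial identity on `mℕ`. -/
def idMul (m : ℕ) : ℕ → Option ℕ := fun x => if m ∣ x then some x else none

theorem leech_embedding_multiplicative (n p : ℕ) (hn : 0 < n) (hp : 0 < p) :
    (pcomp (idMul n) (idMul p) = idMul (Nat.lcm n p)) ∧
    (∀ m q : ℕ, 0 < m → 0 < q →
      pcomp (pcomp (pmul m) (pmulDag n)) (pcomp (pmul p) (pmulDag q))
        = pcomp (pmul (m * p / Nat.gcd n p)) (pmulDag (n * q / Nat.gcd n p))) := by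
  constructor
  · funext x
    simp only [pcomp, idMul]
    by_cases hpx : p ∣ x <;> by_cases hnx : n ∣ x <;>
      simp [hpx, hnx, Nat.lcm_dvd_iff, idMul] <;> tauto
  · intro m q hm hq
    funext x
    have hg : 0 < Nat.gcd n p := Nat.gcd_pos_of_pos_left p hn
    set g := Nat.gcd n p with hgdef
    set n' := n / g with hn'def
    set p' := p / g with hp'def
    have hne : n = g * n' := (Nat.mul_div_cancel' (Nat.gcd_dvd_left n p)).symm
    have hpe : p = g * p' := (Nat.mul_div_cancel' (Nat.gcd_dvd_right n p)).symm
    have cop : Nat.Coprime n' p' := Nat.coprime_div_gcd_div_gcd hg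
    have hn'pos : 0 < n' := by
      rcases Nat.eq_zero_or_pos n' with h | h
      · rw [h, mul_zero] at hne; omega
      · exact h
    have hnq : n * q / g = n' * q := by
      rw [hne, mul_assoc, Nat.mul_div_cancel_left _ hg]
    have hmp : m * p / g = m * p' := by
      rw [hpe, mul_comm g p', ← mul_assoc, Nat.mul_div_cancel _ hg]
    simp only [pcomp, pmul, pmulDag, hnq, hmp]
    by_cases hqx : q ∣ x
    · obtain ⟨k, rfl⟩ := hqx
      have hx : q * k / q = k := Nat.mul_div_cancel_left _ hq
      have hiff : n ∣ k * p ↔ n' ∣ k := by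
        constructor
        · intro h
          rw [hne, hpe, show k * (g * p') = g * (k * p') by ring,
            mul_dvd_mul_iff_left hg.ne'] at h
          exact Nat.Coprime.dvd_of_dvd_mul_right cop h
        · rintro ⟨t, rfl⟩
          exact ⟨t * p', by rw [hne, hpe]; ring⟩
      have hiff2 : n' * q ∣ q * k ↔ n' ∣ k := by
        rw [mul_comm q k]
        exact Nat.mul_dvd_mul_iff_right hq
      simp only [Nat.dvd_mul_right, if_true, hx, Option.bind_some, pcomp, pmul, pmulDag]
      by_cases hnk : n' ∣ k
      · obtain ⟨t, rfl⟩ := hnk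
        rw [if_pos (hiff.mpr (Dvd.intro t rfl)), if_pos (hiff2.mpr (Dvd.intro t rfl))]
        have e1 : n' * t * p / n = t * p' := by
          rw [hne, hpe, show n' * t * (g * p') = g * n' * (t * p') by ring,
            Nat.mul_div_cancel_left _ (by positivity)]
        have e2 : q * (n' * t) / (n' * q) = t := by
          rw [show q * (n' * t) = n' * q * t by ring,
            Nat.mul_div_cancel_left _ (by positivity)]
        simp only [e1, e2, Option.bind_some, Option.some_inj, pmul]
        ring
      · rw [if_neg (fun h => hnk (hiff.mp h)), if_neg (fun h => hnk (hiff2.mp h))]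
        rfl
    · rw [if_neg hqx, if_neg (fun h => hqx (dvd_trans (dvd_mul_left q n') h))]
      rfl
end
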